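/- arXiv:0902.3831 — 3 statements merged into one kernel-verified Lean document; each statement's English description precedes it below -/
import Mathlib

section
/- The map τ : B → [0,1] is strictly order preserving: for all s, s′ ∈ B, if s ≺ s′ then τ(s) < τ(s′). -/
/-- The `j`-th entry (1-indexed) of a finite sequence of positive naturals,
viewed as a natural number. Only used for `1 ≤ j ≤ s.length`. -/
def nthSeq (s : List ℕ+) (j : ℕ) : ℕ := ↑(s.getD (j - 1) 1)

/-- The linear order `⪯` on finite sequences of positive natural numbers:
`s ⪯ t` iff either (a) there is an index `j ≤ min (ℓ s) (ℓ t)` which is the first index where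
`s` and `t` differ, and there `s j < t j`, or (b) `ℓ s ≤ ℓ t` and `t` extends `s`. -/
def sle (s t : List ℕ+) : Prop :=
  (∃ j, 1 ≤ j ∧ j ≤ min s.length t.length ∧
     (∀ i, 1 ≤ i → i < j → nthSeq s i = nthSeq t i) ∧ nthSeq s j < nthSeq t j) ∨
  (s.length ≤ t.length ∧ ∀ j, 1 ≤ j → j ≤ s.length → nthSeq s j = nthSeq t j)

/-- The strict version `≺` of the order `⪯`. -/
def slt (s t : List ℕ+) : Prop := sle s t ∧ s ≠ t

/-- The set `B` of nonempty sequences `s` with `s i ≤ i` for all `1 ≤ i ≤ ℓ s`. -/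
def BSet : Set (List ℕ+) := {s | 1 ≤ s.length ∧ ∀ i, 1 ≤ i → i ≤ s.length → nthSeq s i ≤ i}

/-- `λ n = 1 / (2^n n!)`. -/
noncomputable def lam (n : ℕ) : ℝ := 1 / ((2 : ℝ) ^ n * (n.factorial : ℝ))

/-- `τ s = Σ_{t ∈ B, t ≺ s} λ (ℓ t)`. -/
noncomputable def tau (s : List ℕ+) : ℝ :=
  ∑' t : {t : List ℕ+ // t ∈ BSet ∧ slt t s}, lam t.1.length

/-! ### Auxiliary lemmas -/

lemma lam_pos (n : ℕ) : 0 < lam n := by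
  unfold lam; positivity

lemma ext_of_nthSeq {s t : List ℕ+} (hl : s.length = t.length)
    (h : ∀ j, 1 ≤ j → j ≤ s.length → nthSeq s j = nthSeq t j) : s = t := by
  apply List.ext_getElem hl
  intro n h1 h2
  have h3 := h (n + 1) (by omega) (by omega)
  unfold nthSeq at h3
  simp only [Nat.add_sub_cancel] at h3
  rw [List.getD_eq_getElem _ _ h1, List.getD_eq_getElem _ _ h2] at h3
  exact_mod_cast h3

lemma sle_trans {s t u : List ℕ+} (h1 : sle s t) (h2 : sle t u) : sle s u := by
  rcases h1 with ⟨j1, hj11, hj12, hagree1, hlt1⟩ | ⟨hlen1, heq1⟩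
  · rcases h2 with ⟨j2, hj21, hj22, hagree2, hlt2⟩ | ⟨hlen2, heq2⟩
    · rcases lt_trichotomy j1 j2 with hlt | heq | hgt
      · exact Or.inl ⟨j1, hj11, by omega, fun i hi1 hi2 =>
          (hagree1 i hi1 hi2).trans (hagree2 i hi1 (by omega)),
          by rw [← hagree2 j1 hj11 hlt]; exact hlt1⟩
      · subst heq
        exact Or.inl ⟨j1, hj11, by omega, fun i hi1 hi2 =>
          (hagree1 i hi1 hi2).trans (hagree2 i hi1 hi2), lt_trans hlt1 hlt2⟩
      · exact Or.inl ⟨j2, hj21, by omega, fun i hi1 hi2 =>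
          (hagree1 i hi1 (by omega)).trans (hagree2 i hi1 hi2),
          by rw [hagree1 j2 hj21 hgt]; exact hlt2⟩
    · exact Or.inl ⟨j1, hj11, by omega, fun i hi1 hi2 =>
        (hagree1 i hi1 hi2).trans (heq2 i hi1 (by omega)),
        by rw [← heq2 j1 hj11 (by omega)]; exact hlt1⟩
  · rcases h2 with ⟨j2, hj21, hj22, hagree2, hlt2⟩ | ⟨hlen2, heq2⟩
    · by_cases hc : j2 ≤ s.length
      · exact Or.inl ⟨j2, hj21, by omega, fun i hi1 hi2 =>
          (heq1 i hi1 (by omega)).trans (hagree2 i hi1 hi2),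
          by rw [heq1 j2 hj21 hc]; exact hlt2⟩
      · exact Or.inr ⟨by omega, fun j hj1 hj2 =>
          (heq1 j hj1 hj2).trans (hagree2 j hj1 (by omega))⟩
    · exact Or.inr ⟨le_trans hlen1 hlen2, fun j hj1 hj2 =>
        (heq1 j hj1 hj2).trans (heq2 j hj1 (by omega))⟩

lemma sle_antisymm {s t : List ℕ+} (h1 : sle s t) (h2 : sle t s) : s = t := by
  rcases h1 with ⟨j1, hj11, hj12, hagree1, hlt1⟩ | ⟨hlen1, heq1⟩
  · rcases h2 with ⟨j2, hj21, hj22, hagree2, hlt2⟩ | ⟨hlen2, heq2⟩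
    · rcases lt_trichotomy j1 j2 with hlt | heq | hgt
      · exact absurd (hagree2 j1 hj11 hlt).symm (by omega)
      · subst heq; omega
      · exact absurd (hagree1 j2 hj21 hgt) (by omega)
    · exact absurd (heq2 j1 hj11 (by omega)).symm (by omega)
  · rcases h2 with ⟨j2, hj21, hj22, hagree2, hlt2⟩ | ⟨hlen2, heq2⟩
    · exact absurd (heq1 j2 hj21 (by omega)) (by omega)
    · exact ext_of_nthSeq (by omega) heq1

lemma slt_trans {s t u : List ℕ+} (h1 : slt s t) (h2 : slt t u) : slt s u := by
  refine ⟨sle_trans h1.1 h2.1, fun hsu => ?_⟩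
  subst hsu
  exact h2.2 (sle_antisymm h2.1 h1.1)

/-- The injection target for the summability argument. -/
abbrev TType : Type := (n : ℕ) × ((i : Fin n) → Fin (i.1 + 1))

lemma summable_g : Summable (fun x : TType => lam x.1) := by
  rw [show (fun x : TType => lam x.1)
      = (fun x : ((n : ℕ) × ((i : Fin n) → Fin (i.1 + 1))) => lam x.1) from rfl]
  rw [summable_sigma_of_nonneg (fun x => (lam_pos x.1).le)]
  constructor
  · intro n
    exact Summable.of_finite
  · apply Summable.of_nonneg_of_le (fun n => ?_) (fun n => ?_) summable_geometric_two
    · exact tsum_nonneg fun _ => (lam_pos n).le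
    · rw [tsum_fintype]
      show ∑ _b : ((i : Fin n) → Fin (i.1 + 1)), lam n ≤ (1/2 : ℝ) ^ n
      rw [Finset.sum_const, Finset.card_univ, Fintype.card_pi]
      have hcard : (∏ i : Fin n, Fintype.card (Fin (i.1 + 1))) = n.factorial := by
        simp only [Fintype.card_fin]
        rw [Fin.prod_univ_eq_prod_range (fun i => i + 1) n]
        exact Finset.prod_range_add_one_eq_factorial n
      rw [hcard]
      unfold lam
      rw [nsmul_eq_mul]
      have h2 : (0:ℝ) < 2 ^ n := by positivity
      have hf : (0:ℝ) < (n.factorial : ℝ) := by positivity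
      rw [div_pow, one_pow, mul_one_div]
      rw [div_le_div_iff₀ (by positivity) h2]
      ring_nf
      nlinarith [mul_pos h2 hf]

lemma get_sub_lt {t : List ℕ+} (ht : t ∈ BSet) (i : Fin t.length) :
    (t.get i : ℕ) - 1 < i.1 + 1 := by
  have hB := ht.2 (i.1 + 1) (by omega) i.isLt
  unfold nthSeq at hB
  simp only [Nat.add_sub_cancel] at hB
  rw [List.getD_eq_getElem _ _ i.isLt] at hB
  simp only [List.get_eq_getElem]
  omega

lemma heq_apply {m n : ℕ} (h : m = n) (f : (i : Fin m) → Fin (i.1 + 1))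
    (g : (i : Fin n) → Fin (i.1 + 1)) (hfg : HEq f g) (i : ℕ) (him : i < m) (hin : i < n) :
    (f ⟨i, him⟩ : ℕ) = (g ⟨i, hin⟩ : ℕ) := by
  subst h
  rw [eq_of_heq hfg]

/-- Summability of `lam ∘ length` over any subset of `BSet`. -/
lemma summable_on_subset (A : Set (List ℕ+)) (hA : A ⊆ BSet) :
    Summable ((fun t : List ℕ+ => lam t.length) ∘ ((↑) : A → List ℕ+)) := by
  have hinj : Function.Injective
      (fun t : A => (⟨t.1.length, fun i => ⟨(t.1.get i : ℕ) - 1,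
        get_sub_lt (hA t.2) i⟩⟩ : TType)) := by
    rintro ⟨t1, ht1⟩ ⟨t2, ht2⟩ heq
    simp only at heq
    obtain ⟨hlen, hfun⟩ := Sigma.mk.inj_iff.mp heq
    ext1
    apply List.ext_getElem hlen
    intro n h1 h2
    have hval := heq_apply hlen _ _ hfun n h1 h2
    simp only [Fin.val_mk] at hval
    have hg1 : (t1.get ⟨n, h1⟩ : ℕ) = (t1[n] : ℕ) := rfl
    have hg2 : (t2.get ⟨n, h2⟩ : ℕ) = (t2[n] : ℕ) := rfl
    rw [hg1, hg2] at hval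
    have hp1 : 1 ≤ (t1[n] : ℕ) := t1[n].one_le
    have hp2 : 1 ≤ (t2[n] : ℕ) := t2[n].one_le
    have : (t1[n] : ℕ) = (t2[n] : ℕ) := by omega
    exact_mod_cast this
  have h1 := summable_g.comp_injective hinj
  exact h1.congr (fun t => rfl)

/-- The lower set of `s` in `B`. -/
def ASet (s : List ℕ+) : Set (List ℕ+) := {t | t ∈ BSet ∧ slt t s}

lemma ASet_subset_BSet (s : List ℕ+) : ASet s ⊆ BSet := fun _ ht => ht.1

lemma tau_eq (s : List ℕ+) : tau s = ∑' t : ASet s, lam t.1.length := rfl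

/-- The map `τ : B → [0,1]` is strictly order preserving: for all `s, s' ∈ B`,
if `s ≺ s'` then `τ s < τ s'`. -/
theorem tau_strictMono (s s' : List ℕ+) (hs : s ∈ BSet) (hs' : s' ∈ BSet) (h : slt s s') :
    tau s < tau s' := by
  have hAA' : ASet s ⊆ ASet s' := fun t ht => ⟨ht.1, slt_trans ht.2 h⟩
  have hsA' : s ∈ ASet s' := ⟨hs, h⟩
  have hsA : s ∉ ASet s := fun hc => hc.2.2 rfl
  have hsub : ASet s ∪ {s} ⊆ ASet s' := by
    rintro t (ht | ht)
    · exact hAA' ht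
    · rw [Set.mem_singleton_iff] at ht; subst ht; exact hsA'
  have hSumA : Summable ((fun t : List ℕ+ => lam t.length) ∘ ((↑) : (ASet s) → List ℕ+)) :=
    summable_on_subset _ (ASet_subset_BSet s)
  have hSumA' : Summable ((fun t : List ℕ+ => lam t.length) ∘ ((↑) : (ASet s') → List ℕ+)) :=
    summable_on_subset _ (ASet_subset_BSet s')
  have hSumU : Summable ((fun t : List ℕ+ => lam t.length) ∘
      ((↑) : (ASet s ∪ {s} : Set (List ℕ+)) → List ℕ+)) :=
    summable_on_subset _ (fun t ht => ASet_subset_BSet s' (hsub ht))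
  have hSumSing : Summable ((fun t : List ℕ+ => lam t.length) ∘
      ((↑) : ({s} : Set (List ℕ+)) → List ℕ+)) :=
    summable_on_subset _
      (fun t ht => by rw [Set.mem_singleton_iff] at ht; subst ht; exact hs)
  have hdisj : Disjoint (ASet s) ({s} : Set (List ℕ+)) := by
    rw [Set.disjoint_singleton_right]; exact hsA
  have hUnion : ∑' t : (ASet s ∪ {s} : Set (List ℕ+)), lam t.1.length
      = (∑' t : ASet s, lam t.1.length)
        + ∑' t : ({s} : Set (List ℕ+)), lam t.1.length :=
    Summable.tsum_union_disjoint hdisj hSumA hSumSing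
  have hSing : ∑' t : ({s} : Set (List ℕ+)), lam t.1.length = lam s.length :=
    tsum_singleton s (fun t => lam t.length)
  have hle : ∑' t : (ASet s ∪ {s} : Set (List ℕ+)), lam t.1.length
      ≤ ∑' t : ASet s', lam t.1.length := by
    rw [tsum_subtype (ASet s ∪ {s} : Set (List ℕ+)) (fun t => lam t.length),
      tsum_subtype (ASet s') (fun t => lam t.length)]
    apply Summable.tsum_le_tsum _ (summable_subtype_iff_indicator.mp hSumU)
      (summable_subtype_iff_indicator.mp hSumA')
    intro t
    exact Set.indicator_le_indicator_of_subset hsub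
      (fun t => (lam_pos t.length).le) t
  rw [tau_eq, tau_eq]
  calc ∑' t : ASet s, lam t.1.length
      < (∑' t : ASet s, lam t.1.length) + lam s.length := by
        have := lam_pos s.length; linarith
    _ = ∑' t : (ASet s ∪ {s} : Set (List ℕ+)), lam t.1.length := by
        rw [hUnion, hSing]
    _ ≤ ∑' t : ASet s', lam t.1.length := hle
end

section
/- Let s ∈ B_n and 1 ≤ m ≤ n. Then τ(s + ⟨m+1⟩) − τ(s + ⟨m⟩) = 2λ(n+1). -/
section Aux

lemma nthSeq_eq_get (t : List ℕ+) (j : ℕ) (h1 : 1 ≤ j) (h2 : j ≤ t.length) :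
    nthSeq t j = (t.get ⟨j - 1, by omega⟩ : ℕ) := by
  unfold nthSeq
  rw [List.getD_eq_getElem _ _ (by omega)]
  rfl

lemma nthSeq_append_left (s r : List ℕ+) (j : ℕ) (h : j - 1 < s.length) :
    nthSeq (s ++ r) j = nthSeq s j := by
  unfold nthSeq
  rw [List.getD_append _ _ _ _ h]

lemma nthSeq_append_right (s r : List ℕ+) (j : ℕ) (h : s.length + 1 ≤ j) :
    nthSeq (s ++ r) j = nthSeq r (j - s.length) := by
  unfold nthSeq
  rw [List.getD_append_right _ _ _ _ (by omega)]
  have hidx : j - 1 - s.length = j - s.length - 1 := by omega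
  rw [hidx]

lemma nthSeq_append_last (s : List ℕ+) (x : ℕ+) : nthSeq (s ++ [x]) (s.length + 1) = x := by
  rw [nthSeq_append_right _ _ _ le_rfl]
  simp [nthSeq]

lemma nthSeq_take (t : List ℕ+) (N j : ℕ) (h : j ≤ N) (h1 : 1 ≤ j) (h2 : j ≤ t.length) :
    nthSeq (t.take N) j = nthSeq t j := by
  unfold nthSeq
  rw [List.getD_eq_getElem _ _ (by simp [List.length_take]; omega),
    List.getD_eq_getElem _ _ (by omega)]
  simp [List.getElem_take]

lemma nthSeq_drop (t : List ℕ+) (N j : ℕ) (h1 : 1 ≤ j) (h2 : j ≤ t.length - N) :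
    nthSeq (t.drop N) j = nthSeq t (N + j) := by
  unfold nthSeq
  rw [List.getD_eq_getElem _ _ (by simp [List.length_drop]; omega),
    List.getD_eq_getElem _ _ (by omega)]
  have hidx : N + j - 1 = N + (j - 1) := by omega
  simp only [List.getElem_drop, hidx]

lemma list_eq_of_nthSeq (a c : List ℕ+) (hl : a.length = c.length)
    (h : ∀ j, 1 ≤ j → j ≤ a.length → nthSeq a j = nthSeq c j) : a = c := by
  apply List.ext_get hl
  intro i hi1 hi2
  have h3 := h (i+1) (by omega) (by omega)
  rw [nthSeq_eq_get a (i+1) (by omega) (by omega)] at h3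
  rw [nthSeq_eq_get c (i+1) (by omega) (by omega)] at h3
  exact PNat.coe_injective h3

def Cset (b : ℕ) : Set (List ℕ+) := {r | ∀ i (h : i < r.length), (r.get ⟨i, h⟩ : ℕ) ≤ b + i + 1}

lemma mem_Cset_iff (b : ℕ) (r : List ℕ+) :
    r ∈ Cset b ↔ ∀ j, 1 ≤ j → j ≤ r.length → nthSeq r j ≤ b + j := by
  constructor
  · intro hr j h1 h2
    rw [nthSeq_eq_get r j h1 h2]
    have h3 := hr (j-1) (by omega)
    omega
  · intro h i hi
    have h3 := h (i+1) (by omega) (by omega)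
    rw [nthSeq_eq_get r (i+1) (by omega) (by omega)] at h3
    have h4 : r.get ⟨i+1-1, by omega⟩ = r.get ⟨i, hi⟩ := rfl
    rw [h4] at h3
    omega

def G (b : ℕ) (p : Σ k : ℕ, ∀ i : Fin k, Fin (b + i + 1)) : List ℕ+ :=
  List.ofFn (fun i : Fin p.1 => ((p.2 i : ℕ)).succPNat)

lemma G_length (b : ℕ) (p) : (G b p).length = p.1 := List.length_ofFn

lemma G_inj (b : ℕ) : Function.Injective (G b) := by
  rintro ⟨k, f⟩ ⟨k', f'⟩ h
  have hk : k = k' := by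
    have := congrArg List.length h
    simpa [G_length] using this
  subst hk
  refine Sigma.ext rfl (heq_of_eq ?_)
  have h2 := List.ofFn_injective h
  funext i
  have h3 : ((f i : ℕ)).succPNat = ((f' i : ℕ)).succPNat := congrFun h2 i
  have h4 : (f i : ℕ) = (f' i : ℕ) := Nat.succPNat_injective h3
  exact Fin.ext h4

lemma G_range (b : ℕ) : Set.range (G b) = Cset b := by
  ext r
  constructor
  · rintro ⟨⟨k, f⟩, rfl⟩
    intro i h
    have h3 : (G b ⟨k, f⟩).get ⟨i, h⟩ =
        ((f (Fin.cast (List.length_ofFn) ⟨i, h⟩) : ℕ)).succPNat :=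
      List.get_ofFn _ _
    rw [h3, Nat.succPNat_coe]
    have h4 := (f (Fin.cast (List.length_ofFn) ⟨i, h⟩)).2
    simp only [Fin.coe_cast] at h4
    omega
  · intro hr
    refine ⟨⟨r.length, fun i => ⟨(r.get ⟨i.1, i.2⟩ : ℕ) - 1,
      by have := hr i.1 i.2; have := (r.get ⟨i.1, i.2⟩).2; omega⟩⟩, ?_⟩
    apply List.ext_get (by simp [G_length])
    intro i h1 h2
    have h3 : (G b ⟨r.length, _⟩).get ⟨i, h1⟩ = _ := List.get_ofFn _ ⟨i, h1⟩
    rw [h3]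
    apply PNat.coe_injective
    rw [Nat.succPNat_coe]
    have hcast : (Fin.cast (List.length_ofFn) (⟨i, h1⟩ : Fin (G b _).length)) =
        (⟨i, h2⟩ : Fin r.length) := by ext; rfl
    show ((r.get ⟨i, h2⟩ : ℕ) - 1).succ = _
    exact Nat.succ_pred_eq_of_pos (r.get ⟨i, h2⟩).2

lemma prod_fact (b k : ℕ) : b.factorial * ∏ i ∈ Finset.range k, (b + i + 1) = (b + k).factorial := by
  induction k with
  | zero => simp
  | succ k ih =>
    rw [Finset.prod_range_succ, ← mul_assoc, ih, show b + (k+1) = (b+k)+1 from rfl,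
      Nat.factorial_succ]
    ring

lemma key_eq (b k : ℕ) :
    ((∏ i : Fin k, (b + (i : ℕ) + 1) : ℕ) : ℝ) * lam (b + k)
      = (1 / (b.factorial * 2 ^ b)) * (1/2)^k := by
  have hn : b.factorial * (∏ i : Fin k, (b + (i : ℕ) + 1)) = (b+k).factorial := by
    rw [show (∏ i : Fin k, (b + (i : ℕ) + 1)) = ∏ i ∈ Finset.range k, (b + i + 1) from
      Fin.prod_univ_eq_prod_range (fun i => b + i + 1) k]
    exact prod_fact b k
  have h : (b.factorial : ℝ) * ∏ i : Fin k, ((b : ℝ) + (i : ℕ) + 1) = ((b+k).factorial : ℝ) := by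
    exact_mod_cast congrArg (fun x : ℕ => (x : ℝ)) hn
  unfold lam
  have h1 : ((b+k).factorial : ℝ) ≠ 0 := by positivity
  have h2 : (b.factorial : ℝ) ≠ 0 := by positivity
  field_simp
  rw [pow_add]
  push_cast
  have h3 : ((1:ℝ)/2)^k * 2^k = 1 := by rw [← mul_pow]; norm_num
  linear_combination (2:ℝ)^b * h - ((b+k).factorial : ℝ) * 2^b * h3

lemma fiber_tsum (b k : ℕ) :
    ∑' _ : (∀ i : Fin k, Fin (b + i + 1)), lam (b + k)
      = (1 / (b.factorial * 2 ^ b)) * (1/2)^k := by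
  rw [tsum_fintype]
  rw [Finset.sum_const, Finset.card_univ, Fintype.card_pi]
  simp only [Fintype.card_fin]
  rw [nsmul_eq_mul]
  exact key_eq b k

lemma summable_sigma' (b : ℕ) :
    Summable (fun p : (Σ k : ℕ, ∀ i : Fin k, Fin (b + i + 1)) => lam (b + p.1)) := by
  rw [summable_sigma_of_nonneg (fun p => (lam_pos _).le)]
  constructor
  · intro k
    exact Summable.of_finite
  · apply Summable.congr (f := fun k : ℕ => (1 / ((b.factorial : ℝ) * 2 ^ b)) * (1/2)^k)
    · exact (summable_geometric_two).mul_left _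
    · intro k
      exact (fiber_tsum b k).symm

lemma tsum_sigmaC (b : ℕ) :
    ∑' p : (Σ k : ℕ, ∀ i : Fin k, Fin (b + i + 1)), lam (b + p.1) = 2 * lam b := by
  rw [Summable.tsum_sigma (summable_sigma' b)]
  calc ∑' k : ℕ, ∑' _ : (∀ i : Fin k, Fin (b + i + 1)), lam (b + k)
      = ∑' k : ℕ, (1 / ((b.factorial : ℝ) * 2 ^ b)) * (1/2)^k := by
        exact tsum_congr (fun k => fiber_tsum b k)
    _ = (1 / ((b.factorial : ℝ) * 2 ^ b)) * ∑' k : ℕ, ((1:ℝ)/2)^k := tsum_mul_left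
    _ = 2 * lam b := by rw [tsum_geometric_two]; unfold lam; field_simp

noncomputable def cset_equiv (b : ℕ) : (Σ k : ℕ, ∀ i : Fin k, Fin (b + i + 1)) ≃ ↥(Cset b) :=
  (Equiv.ofInjective (G b) (G_inj b)).trans (Equiv.setCongr (G_range b))

lemma cset_equiv_apply (b : ℕ) (p) : ((cset_equiv b p : ↥(Cset b)) : List ℕ+) = G b p := rfl

lemma summable_Cset (b : ℕ) : Summable (fun r : ↥(Cset b) => lam (b + r.1.length)) := by
  rw [← Equiv.summable_iff (cset_equiv b)]
  apply Summable.congr (summable_sigma' b)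
  intro p
  simp only [Function.comp, cset_equiv_apply, G_length]

lemma tsum_Cset (b : ℕ) : ∑' r : ↥(Cset b), lam (b + r.1.length) = 2 * lam b := by
  rw [← Equiv.tsum_eq (cset_equiv b) (fun r => lam (b + r.1.length))]
  rw [← tsum_sigmaC b]
  apply tsum_congr
  intro p
  simp only [cset_equiv_apply, G_length]

end Aux

/-- Let `s ∈ B_n` and `1 ≤ m ≤ n`. Then `τ (s + ⟨m+1⟩) - τ (s + ⟨m⟩) = 2 λ (n+1)`. -/
theorem tau_append_succ_sub (n : ℕ) (s : List ℕ+) (hs : s ∈ BSet) (hlen : s.length = n)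
    (m : ℕ+) (hm : (m : ℕ) ≤ n) :
    tau (s ++ [m + 1]) - tau (s ++ [m]) = 2 * lam (n + 1) := by
  have hm1 : 1 ≤ (m : ℕ) := m.2
  have hn1 : 1 ≤ n := le_trans hm1 hm
  set u := s ++ [m] with hu
  set v := s ++ [m + 1] with hv
  have hul : u.length = n + 1 := by simp [hu, hlen]
  have hvl : v.length = n + 1 := by simp [hv, hlen]
  have hu_last : nthSeq u (n+1) = (m : ℕ) := by
    have h := nthSeq_append_last s m
    rw [hlen] at h
    exact h
  have hv_last : nthSeq v (n+1) = (m : ℕ) + 1 := by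
    have h := nthSeq_append_last s (m+1)
    rw [hlen] at h
    simpa using h
  have huj : ∀ j, 1 ≤ j → j ≤ n → nthSeq u j = nthSeq s j := by
    intro j h1 h2
    exact nthSeq_append_left s [m] j (by omega)
  have hvj : ∀ j, 1 ≤ j → j ≤ n → nthSeq v j = nthSeq s j := by
    intro j h1 h2
    exact nthSeq_append_left s [m+1] j (by omega)
  have hvu : ∀ j, 1 ≤ j → j ≤ n → nthSeq v j = nthSeq u j := by
    intro j h1 h2; rw [hvj j h1 h2, huj j h1 h2]
  have hurl : ∀ r : List ℕ+, (u ++ r).length = n + 1 + r.length := by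
    intro r; rw [List.length_append, hul]
  have hur_left : ∀ (r : List ℕ+) (j : ℕ), 1 ≤ j → j ≤ n + 1 →
      nthSeq (u ++ r) j = nthSeq u j := by
    intro r j h1 h2
    exact nthSeq_append_left u r j (by omega)
  have hBSet_ur : ∀ r : List ℕ+, (u ++ r ∈ BSet ↔ r ∈ Cset (n+1)) := by
    intro r
    constructor
    · intro ht
      rw [mem_Cset_iff]
      intro j h1 h2
      have h3 := ht.2 (n+1+j) (by omega) (by rw [hurl r]; omega)
      rw [nthSeq_append_right u r (n+1+j) (by omega)] at h3
      have h4 : n+1+j - u.length = j := by omega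
      rw [h4] at h3
      omega
    · intro hr
      constructor
      · rw [hurl r]; omega
      · intro j h1 h2
        rw [hurl r] at h2
        rcases le_or_gt j (n+1) with hc | hc
        · rw [hur_left r j h1 hc]
          rcases le_or_gt j n with hj | hj
          · rw [huj j h1 hj]
            exact hs.2 j h1 (by omega)
          · have hj' : j = n+1 := by omega
            rw [hj', hu_last]
            omega
        · rw [nthSeq_append_right u r j (by omega)]
          have h3 := (mem_Cset_iff (n+1) r).1 hr (j - u.length) (by omega) (by omega)
          omega
  have hslt_uv : ∀ r : List ℕ+, r ∈ Cset (n+1) → slt (u ++ r) v := by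
    intro r hr
    constructor
    · left
      refine ⟨n+1, by omega, ?_, ?_, ?_⟩
      · rw [hurl r, hvl]; omega
      · intro i h1 h2
        rw [hur_left r i h1 (by omega), huj i h1 (by omega), ← hvj i h1 (by omega)]
      · rw [hur_left r (n+1) (by omega) le_rfl, hu_last, hv_last]
        omega
    · intro heq
      have h3 := congrArg (fun t => nthSeq t (n+1)) heq
      rw [hur_left r (n+1) (by omega) le_rfl, hu_last, hv_last] at h3
      omega
  have key : {t : List ℕ+ | t ∈ BSet ∧ slt t v}
      = {t : List ℕ+ | t ∈ BSet ∧ slt t u} ∪ ((fun r => u ++ r) '' Cset (n+1)) := by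
    ext t
    simp only [Set.mem_setOf_eq, Set.mem_union, Set.mem_image]
    constructor
    · rintro ⟨htB, hsle, hne⟩
      rcases hsle with ⟨j, hj1, hjm, hprev, hlt⟩ | ⟨hlen', hpre⟩
      · have hjt : j ≤ t.length := le_trans hjm (min_le_left _ _)
        have hjv : j ≤ n+1 := by have := le_trans hjm (min_le_right _ _); omega
        rcases le_or_gt j n with hj | hj
        · left
          refine ⟨htB, ⟨Or.inl ⟨j, hj1, le_min hjt (by omega),
            fun i h1 h2 => by rw [hprev i h1 h2, ← hvu i h1 (by omega)],
            by rw [← hvu j hj1 hj]; exact hlt⟩, ?_⟩⟩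
          intro heq
          rw [heq] at hlt
          have := hvu j hj1 hj
          omega
        · have hj' : j = n+1 := by omega
          subst hj'
          have hlt' : nthSeq t (n+1) < (m:ℕ) + 1 := by rwa [hv_last] at hlt
          rcases lt_or_ge (nthSeq t (n+1)) (m:ℕ) with hc | hc
          · left
            refine ⟨htB, ⟨Or.inl ⟨n+1, by omega, le_min hjt (by omega),
              fun i h1 h2 => by rw [hprev i h1 h2, ← hvu i h1 (by omega)],
              by rw [hu_last]; exact hc⟩, ?_⟩⟩
            intro heq
            rw [heq, hu_last] at hc
            omega
          · have hc' : nthSeq t (n+1) = (m:ℕ) := by omega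
            right
            refine ⟨t.drop (n+1), ?_, ?_⟩
            · rw [mem_Cset_iff]
              intro j h1 h2
              rw [List.length_drop] at h2
              rw [nthSeq_drop t (n+1) j h1 (by omega)]
              have := htB.2 (n+1+j) (by omega) (by omega)
              omega
            · have htake : t.take (n+1) = u := by
                apply list_eq_of_nthSeq
                · rw [List.length_take, hul]; omega
                · intro j h1 h2
                  rw [List.length_take] at h2
                  have hj2 : j ≤ n+1 := by omega
                  rw [nthSeq_take t (n+1) j hj2 h1 (by omega)]
                  rcases le_or_gt j n with hj3 | hj3
                  · rw [hprev j h1 (by omega), hvu j h1 hj3]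
                  · have hj4 : j = n+1 := by omega
                    rw [hj4, hc', hu_last]
              calc u ++ t.drop (n+1) = t.take (n+1) ++ t.drop (n+1) := by rw [htake]
                _ = t := List.take_append_drop _ _
      · rcases lt_or_ge t.length (n+1) with hc | hc
        · left
          refine ⟨htB, ⟨Or.inr ⟨by omega, fun j h1 h2 => ?_⟩, ?_⟩⟩
          · rw [hpre j h1 h2, hvu j h1 (by omega)]
          · intro heq
            rw [heq] at hc
            omega
        · have hteq : t = v := by
            apply list_eq_of_nthSeq t v (by omega)
            exact hpre
          exact absurd hteq hne
    · rintro (⟨htB, hsle, hne⟩ | ⟨r, hr, rfl⟩)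
      · refine ⟨htB, ?_⟩
        rcases hsle with ⟨j, hj1, hjm, hprev, hlt⟩ | ⟨hlen', hpre⟩
        · have hjt : j ≤ t.length := le_trans hjm (min_le_left _ _)
          have hju : j ≤ n+1 := by have := le_trans hjm (min_le_right _ _); omega
          rcases le_or_gt j n with hj | hj
          · refine ⟨Or.inl ⟨j, hj1, le_min hjt (by omega),
              fun i h1 h2 => by rw [hprev i h1 h2, hvu i h1 (by omega)],
              by rw [hvu j hj1 hj]; exact hlt⟩, ?_⟩
            intro heq
            rw [heq] at hlt
            have := hvu j hj1 hj
            omega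
          · have hj' : j = n+1 := by omega
            subst hj'
            have hlt' : nthSeq t (n+1) < (m:ℕ) := by rwa [hu_last] at hlt
            refine ⟨Or.inl ⟨n+1, by omega, le_min hjt (by omega),
              fun i h1 h2 => by rw [hprev i h1 h2, hvu i h1 (by omega)],
              by rw [hv_last]; omega⟩, ?_⟩
            intro heq
            rw [heq, hv_last] at hlt'
            omega
        · rcases lt_or_ge t.length (n+1) with hc | hc
          · refine ⟨Or.inr ⟨by omega, fun j h1 h2 => by
              rw [hpre j h1 h2, ← hvu j h1 (by omega)]⟩, ?_⟩
            intro heq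
            rw [heq] at hc
            omega
          · have hteq : t.length = n+1 := by omega
            refine ⟨Or.inl ⟨n+1, by omega, le_min (by omega) (by omega),
              fun i h1 h2 => by rw [hpre i h1 (by omega), ← hvu i h1 (by omega)], ?_⟩, ?_⟩
            · rw [hpre (n+1) (by omega) (by omega), hu_last, hv_last]
              omega
            · intro heq
              have h3 := congrArg (fun t => nthSeq t (n+1)) heq
              rw [hv_last] at h3
              rw [hpre (n+1) (by omega) (by omega), hu_last] at h3
              omega
      · exact ⟨(hBSet_ur r).2 hr, hslt_uv r hr⟩
  have hdisj : Disjoint {t : List ℕ+ | t ∈ BSet ∧ slt t u}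
      ((fun r => u ++ r) '' Cset (n+1)) := by
    rw [Set.disjoint_left]
    rintro t ⟨htB, hsle, hne⟩ ⟨r, hr, rfl⟩
    rcases hsle with ⟨j, hj1, hjm, hprev, hlt⟩ | ⟨hlen', hpre⟩
    · have hju : j ≤ n+1 := by have := le_trans hjm (min_le_right _ _); omega
      rw [hur_left r j hj1 hju] at hlt
      omega
    · have hrl : r = [] := by
        rw [hurl r, hul] at hlen'
        exact List.length_eq_zero_iff.1 (by omega)
      apply hne
      rw [hrl]
      simp
  have hBC : ∀ t, t ∈ BSet → t ∈ Cset 0 := by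
    intro t ht
    rw [mem_Cset_iff]
    intro j h1 h2
    have := ht.2 j h1 h2
    omega
  have hsub : ∀ X : Set (List ℕ+), X ⊆ Cset 0 →
      Summable (fun t : ↥X => lam t.1.length) := by
    intro X hX
    have h0 := (summable_Cset 0).comp_injective (Set.inclusion_injective hX)
    exact h0.congr (fun t => by simp [Function.comp, Set.inclusion])
  have hAuC : {t : List ℕ+ | t ∈ BSet ∧ slt t u} ⊆ Cset 0 := fun t ht => hBC t ht.1
  have hDC : ((fun r => u ++ r) '' Cset (n+1)) ⊆ Cset 0 := by
    rintro t ⟨r, hr, rfl⟩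
    exact hBC _ ((hBSet_ur r).2 hr)
  have hSumAu := hsub _ hAuC
  have hSumD := hsub _ hDC
  have hinj : Function.Injective (fun r : List ℕ+ => u ++ r) := fun a b h => by simpa using h
  have hDsum : ∑' t : ↥((fun r => u ++ r) '' Cset (n+1)), lam t.1.length = 2 * lam (n+1) := by
    rw [tsum_image (fun t : List ℕ+ => lam t.length) hinj.injOn]
    rw [← tsum_Cset (n+1)]
    apply tsum_congr
    intro r
    congr 1
    exact hurl r.1
  have htauv : tau v = ∑' t : ↥({t : List ℕ+ | t ∈ BSet ∧ slt t v}), lam t.1.length := rfl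
  have htauu : tau u = ∑' t : ↥({t : List ℕ+ | t ∈ BSet ∧ slt t u}), lam t.1.length := rfl
  have h1 : tau v = (∑' t : ↥({t : List ℕ+ | t ∈ BSet ∧ slt t u}), lam t.1.length)
      + (∑' t : ↥((fun r => u ++ r) '' Cset (n+1)), lam t.1.length) := by
    rw [htauv, key]
    exact Summable.tsum_union_disjoint (f := fun t : List ℕ+ => lam t.length) hdisj hSumAu hSumD
  rw [h1, htauu, hDsum]
  ring
end

section
/- The function d on the Hawaiian Earring ℍ, defined by d(x,y) = ‖x − y‖ (Euclidean norm) if x and y lie on a common circle L_n, and d(x,y) = ‖x‖ + ‖y‖ otherwise, is a well-defined metric on ℍ: it is symmetric, vanishes exactly when x = y, and satisfies the triangle inequality. -/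
/-- The circle `L_n ⊂ ℝ² = ℂ` of radius `1/n` centred at `(1/n, 0)`. -/
noncomputable def Lcirc (n : ℕ) : Set ℂ := Metric.sphere ((1 / (n : ℝ) : ℝ) : ℂ) (1 / (n : ℝ))

/-- The Hawaiian Earring `ℍ ⊂ ℝ² = ℂ`, the union of the circles `L_n`, `n ≥ 1`. -/
def HSet : Set ℂ := ⋃ n ∈ {n : ℕ | 1 ≤ n}, Lcirc n

open Classical in
/-- The metric `d` on the Hawaiian Earring: `d x y = ‖x - y‖` (Euclidean norm) if `x` and
`y` lie on a common circle `L_n`, and `d x y = ‖x‖ + ‖y‖` otherwise. -/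
noncomputable def HEdist (x y : ℂ) : ℝ :=
  if ∃ n : ℕ, 1 ≤ n ∧ x ∈ Lcirc n ∧ y ∈ Lcirc n then ‖x - y‖ else ‖x‖ + ‖y‖

lemma HEdist_pos_eq {x y : ℂ} (h : ∃ n : ℕ, 1 ≤ n ∧ x ∈ Lcirc n ∧ y ∈ Lcirc n) :
    HEdist x y = ‖x - y‖ := by
  unfold HEdist; rw [if_pos h]

lemma HEdist_neg_eq {x y : ℂ} (h : ¬ ∃ n : ℕ, 1 ≤ n ∧ x ∈ Lcirc n ∧ y ∈ Lcirc n) :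
    HEdist x y = ‖x‖ + ‖y‖ := by
  unfold HEdist; rw [if_neg h]

lemma Lcirc_eq {n : ℕ} {y : ℂ} (hy : y ∈ Lcirc n) :
    y.re ^ 2 + y.im ^ 2 = 2 * y.re / (n : ℝ) := by
  have h : ‖y - ((1/(n:ℝ):ℝ) : ℂ)‖ = 1/(n:ℝ) := by
    simpa [Lcirc, Metric.mem_sphere, Complex.dist_eq] using hy
  have h2 := congrArg (fun t => t^2) h
  simp only [Complex.sq_norm, Complex.normSq_apply, Complex.sub_re, Complex.sub_im,
    Complex.ofReal_re, Complex.ofReal_im] at h2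
  linear_combination h2

/-- Two distinct circles meet only at `0`. -/
lemma Lcirc_inter {n m : ℕ} (hn : 1 ≤ n) (hm : 1 ≤ m) (hnm : n ≠ m) {y : ℂ}
    (hyn : y ∈ Lcirc n) (hym : y ∈ Lcirc m) : y = 0 := by
  have e1 := Lcirc_eq hyn
  have e2 := Lcirc_eq hym
  have hn' : (0:ℝ) < (n:ℝ) := by exact_mod_cast hn
  have hm' : (0:ℝ) < (m:ℝ) := by exact_mod_cast hm
  have hne : (1/(n:ℝ)) ≠ 1/(m:ℝ) := by
    intro h
    rw [div_eq_div_iff hn'.ne' hm'.ne'] at h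
    simp only [one_mul] at h
    exact hnm (by exact_mod_cast h.symm)
  have key : y.re * ((1/(n:ℝ)) - 1/(m:ℝ)) = 0 := by
    field_simp
    field_simp at e1 e2
    nlinarith [e1, e2]
  have hre : y.re = 0 := by
    rcases mul_eq_zero.1 key with h | h
    · exact h
    · exact absurd (by linarith : (1/(n:ℝ)) = 1/(m:ℝ)) hne
  have h3 : y.im ^ 2 = 0 := by
    rw [hre] at e1
    simpa using e1
  have him : y.im = 0 := by
    exact pow_eq_zero_iff (two_ne_zero) |>.1 h3
  exact Complex.ext hre him

lemma HEdist_le (x z : ℂ) : HEdist x z ≤ ‖x‖ + ‖z‖ := by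
  unfold HEdist
  split_ifs with h
  · exact norm_sub_le x z
  · exact le_rfl

/-- The function `d` on the Hawaiian Earring `ℍ` is a well-defined metric: it is symmetric,
vanishes exactly when `x = y`, and satisfies the triangle inequality. -/
theorem HEdist_isMetric :
    (∀ x ∈ HSet, ∀ y ∈ HSet, HEdist x y = HEdist y x) ∧
    (∀ x ∈ HSet, ∀ y ∈ HSet, (HEdist x y = 0 ↔ x = y)) ∧
    (∀ x ∈ HSet, ∀ y ∈ HSet, ∀ z ∈ HSet, HEdist x z ≤ HEdist x y + HEdist y z) := by
  have memH : ∀ x ∈ HSet, ∃ n : ℕ, 1 ≤ n ∧ x ∈ Lcirc n := by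
    intro x hx
    simpa [HSet] using hx
  refine ⟨?_, ?_, ?_⟩
  · -- symmetry
    intro x hx y hy
    by_cases h : ∃ n : ℕ, 1 ≤ n ∧ x ∈ Lcirc n ∧ y ∈ Lcirc n
    · obtain ⟨n, h1, h2, h3⟩ := h
      rw [HEdist_pos_eq ⟨n, h1, h2, h3⟩, HEdist_pos_eq ⟨n, h1, h3, h2⟩, norm_sub_rev]
    · have h' : ¬ ∃ n : ℕ, 1 ≤ n ∧ y ∈ Lcirc n ∧ x ∈ Lcirc n := by
        rintro ⟨n, h1, h2, h3⟩; exact h ⟨n, h1, h3, h2⟩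
      rw [HEdist_neg_eq h, HEdist_neg_eq h', add_comm]
  · -- vanishing
    intro x hx y hy
    by_cases h : ∃ n : ℕ, 1 ≤ n ∧ x ∈ Lcirc n ∧ y ∈ Lcirc n
    · rw [HEdist_pos_eq h]
      simp [sub_eq_zero]
    · rw [HEdist_neg_eq h]
      constructor
      · intro h0
        have hx0 : ‖x‖ = 0 := by
          have := norm_nonneg x; have := norm_nonneg y; linarith
        have hy0 : ‖y‖ = 0 := by
          have := norm_nonneg x; linarith
        rw [norm_eq_zero] at hx0 hy0
        rw [hx0, hy0]
      · intro hxy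
        subst hxy
        obtain ⟨n, hn, hxn⟩ := memH x hx
        exact absurd ⟨n, hn, hxn, hxn⟩ h
  · -- triangle inequality
    intro x hx y hy z hz
    have hxz := HEdist_le x z
    by_cases hxy : ∃ n : ℕ, 1 ≤ n ∧ x ∈ Lcirc n ∧ y ∈ Lcirc n
    · by_cases hyz : ∃ n : ℕ, 1 ≤ n ∧ y ∈ Lcirc n ∧ z ∈ Lcirc n
      · obtain ⟨n, hn, hxn, hyn⟩ := hxy
        obtain ⟨m, hm, hym, hzm⟩ := hyz
        by_cases hnm : n = m
        · subst hnm
          rw [HEdist_pos_eq ⟨n, hn, hxn, hzm⟩, HEdist_pos_eq ⟨n, hn, hxn, hyn⟩,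
            HEdist_pos_eq ⟨n, hn, hym, hzm⟩]
          exact norm_sub_le_norm_sub_add_norm_sub x y z
        · have hy0 : y = 0 := Lcirc_inter hn hm hnm hyn hym
          subst hy0
          rw [HEdist_pos_eq ⟨n, hn, hxn, hyn⟩, HEdist_pos_eq ⟨m, hm, hym, hzm⟩,
            sub_zero, zero_sub, norm_neg]
          exact hxz
      · obtain ⟨n, hn, hxn, hyn⟩ := hxy
        rw [HEdist_pos_eq ⟨n, hn, hxn, hyn⟩, HEdist_neg_eq hyz]
        have h1 : ‖x‖ - ‖y‖ ≤ ‖x - y‖ := norm_sub_norm_le x y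
        linarith
    · by_cases hyz : ∃ n : ℕ, 1 ≤ n ∧ y ∈ Lcirc n ∧ z ∈ Lcirc n
      · rw [HEdist_neg_eq hxy, HEdist_pos_eq hyz]
        have h1 : ‖z‖ - ‖y‖ ≤ ‖y - z‖ := by
          rw [norm_sub_rev]; exact norm_sub_norm_le z y
        linarith
      · rw [HEdist_neg_eq hxy, HEdist_neg_eq hyz]
        have := norm_nonneg y
        linarith
end
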